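/- For every integer ℓ ≥ 1 there exist infinitely many odd integers n > 1 such that for every k with 1 ≤ k ≤ ℓ, the integer n - 2^k is not squarefree. Consequently, arbitrarily large least exponents k with n - 2^k squarefree are required as n ranges over the odd integers. -/

import Mathlib

/-- For every `ℓ ≥ 1` there are infinitely many odd integers `n > 1` such that
`n - 2^k` is not squarefree for every `1 ≤ k ≤ ℓ`; consequently, arbitrarily large
least exponents `k` with `n - 2^k` squarefree are required. -/
theorem infinitely_many_with_large_least_exponent (ℓ : ℕ) (hℓ : 1 ≤ ℓ) :
    {n : ℕ | Odd n ∧ 1 < n ∧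
      ∀ k : ℕ, 1 ≤ k → k ≤ ℓ → ¬ Squarefree ((n : ℤ) - 2 ^ k)}.Infinite ∧
    ∀ N : ℕ, ∃ n : ℕ, N < n ∧ Odd n ∧ 1 < n ∧
      ∀ k : ℕ, 1 ≤ k → Squarefree ((n : ℤ) - 2 ^ k) → ℓ < k := by
  classical
  set p : ℕ → ℕ := Nat.nth Nat.Prime with hp
  have hpprime : ∀ i, (p i).Prime := fun i => Nat.prime_nth_prime i
  have hpinj : Function.Injective p := Nat.nth_injective Nat.infinite_setOf_prime
  set s : ℕ → ℕ := fun i => (p i) ^ 2 with hs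
  set a : ℕ → ℕ := fun i => if i = 0 then 1 else 2 ^ i with ha
  set t : Finset ℕ := Finset.range (ℓ + 1) with ht
  have hsne : ∀ i ∈ t, s i ≠ 0 := fun i _ => pow_ne_zero 2 (hpprime i).ne_zero
  have hpair : Set.Pairwise t (Function.onFun Nat.Coprime s) := by
    intro i _ j _ hij
    exact Nat.Coprime.pow 2 2 ((Nat.coprime_primes (hpprime i) (hpprime j)).mpr
      (fun h => hij (hpinj h)))
  obtain ⟨n₀, hn₀⟩ := Nat.chineseRemainderOfFinset a s t hsne hpair
  set L : ℕ := ∏ i ∈ t, s i with hL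
  have hsL : ∀ i ∈ t, s i ∣ L := fun i hi => Finset.dvd_prod_of_mem s hi
  have hLpos : 0 < L := Finset.prod_pos (fun i hi => Nat.pos_of_ne_zero (hsne i hi))
  have h0t : (0 : ℕ) ∈ t := Finset.mem_range.mpr (Nat.succ_pos ℓ)
  have hs0 : s 0 = 4 := by
    have : p 0 = 2 := Nat.nth_prime_zero_eq_two
    simp [hs, this]
  have hL4 : 4 ∣ L := hs0 ▸ hsL 0 h0t
  have hL2 : 2 ≤ L := le_trans (by norm_num) (Nat.le_of_dvd hLpos hL4)
  -- the arithmetic progression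
  set f : ℕ → ℕ := fun m => n₀ + (m + 1) * L with hf
  have hmem : ∀ m, f m ∈ {n : ℕ | Odd n ∧ 1 < n ∧
      ∀ k : ℕ, 1 ≤ k → k ≤ ℓ → ¬ Squarefree ((n : ℤ) - 2 ^ k)} := by
    intro m
    have hmod : ∀ i ∈ t, f m ≡ a i [MOD s i] := by
      intro i hi
      have h1 : n₀ ≡ f m [MOD s i] :=
        (Nat.modEq_iff_dvd' (Nat.le_add_right _ _)).mpr
          (by simpa [hf, Nat.add_sub_cancel_left] using
            Dvd.dvd.mul_left (hsL i hi) (m + 1))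
      exact h1.symm.trans (hn₀ i hi)
    have hodd : Odd (f m) := by
      have h4 : f m ≡ 1 [MOD 4] := by
        have := hmod 0 h0t
        simpa [ha, hs0] using this
      have : f m % 2 = 1 := by
        have h1 : f m % 4 = 1 := by
          have := h4; unfold Nat.ModEq at this; simpa using this
        omega
      exact Nat.odd_iff.mpr this
    refine ⟨hodd, ?_, ?_⟩
    · have h1 : L ≤ (m + 1) * L := Nat.le_mul_of_pos_left L (Nat.succ_pos m)
      simp only [hf]
      omega
    · intro k hk1 hkℓ hsq
      have hkt : k ∈ t := Finset.mem_range.mpr (Nat.lt_succ_of_le hkℓ)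
      have hmk : f m ≡ 2 ^ k [MOD s k] := by
        have := hmod k hkt
        simpa [ha, Nat.one_le_iff_ne_zero.mp hk1] using this
      have hdvd : ((s k : ℤ)) ∣ ((f m : ℤ) - 2 ^ k) := by
        have := (Nat.modEq_iff_dvd (n := s k)).mp hmk.symm
        simpa [Nat.cast_pow] using this
      have : IsUnit ((p k : ℤ)) := by
        apply hsq (p k)
        refine dvd_trans ?_ hdvd
        simp [hs, sq]
      exact (Int.prime_iff_natAbs_prime.mpr (by simpa using hpprime k)).not_unit this
  have hinj : Function.Injective f := by
    intro x y hxy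
    simp only [hf] at hxy
    have := Nat.eq_of_mul_eq_mul_right hLpos (by omega : (x + 1) * L = (y + 1) * L)
    omega
  have hinf : {n : ℕ | Odd n ∧ 1 < n ∧
      ∀ k : ℕ, 1 ≤ k → k ≤ ℓ → ¬ Squarefree ((n : ℤ) - 2 ^ k)}.Infinite :=
    Set.infinite_of_injective_forall_mem hinj hmem
  refine ⟨hinf, fun N => ?_⟩
  obtain ⟨n, hn, hNn⟩ := hinf.exists_gt N
  obtain ⟨hodd, hn1, hns⟩ := hn
  refine ⟨n, hNn, hodd, hn1, fun k hk1 hsq => ?_⟩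
  by_contra h
  exact hns k hk1 (by omega) hsq
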